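/- For an integer k ≥ 3, let U_k be the family of 2k subsets K_{k,±i} (i ∈ [k]) of [±(k+1)] as above. Then for every subfamily T ⊆ U_k with 2 ≤ |T| ≤ k + 1, the inequality |T| + k < |∪_{L∈T} L| holds. -/

import Mathlib

/-- `[±t] = {-t,...,-1,1,...,t} ⊆ ℤ`. -/
noncomputable def pmSet (t : ℕ) : Finset ℤ := (Finset.Icc (-(t : ℤ)) t).erase 0

/-- `K_{k,i} = ([k+1] \ {i}) ∪ {-i}` for `i ∈ [k]`, and
`K_{k,-i} = [±(k+1)] \ K_{k,i}` for `i ∈ [k]`. -/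
noncomputable def Kset (k : ℕ) (i : ℤ) : Finset ℤ :=
  if 0 < i then ((Finset.Icc (1 : ℤ) (k + 1)).erase i) ∪ {-i}
  else pmSet (k + 1) \ (((Finset.Icc (1 : ℤ) (k + 1)).erase (-i)) ∪ {i})


/-- The family `U_k` of the `2k` sets `K_{k,±i}`, `i ∈ [k]`. -/
noncomputable def Ufamily (k : ℕ) : Finset (Finset ℤ) := (pmSet k).image (Kset k)

lemma mem_pmSet {t:ℕ}{x:ℤ} : x ∈ pmSet t ↔ x ≠ 0 ∧ -(t:ℤ) ≤ x ∧ x ≤ t := by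
  simp [pmSet, Finset.mem_erase, Finset.mem_Icc, and_assoc]

lemma mem_Kset {k:ℕ}{i x:ℤ} (hi : i ∈ pmSet k) :
    x ∈ Kset k i ↔ (0 < i ∧ ((1 ≤ x ∧ x ≤ k+1 ∧ x ≠ i) ∨ x = -i)) ∨
      (i < 0 ∧ ((-(k:ℤ)-1 ≤ x ∧ x ≤ -1 ∧ x ≠ i) ∨ x = -i)) := by
  rw [mem_pmSet] at hi
  unfold Kset
  split_ifs with h
  · simp [Finset.mem_union, Finset.mem_erase, Finset.mem_Icc]
    omega
  · simp [Finset.mem_sdiff, Finset.mem_union, Finset.mem_erase, Finset.mem_Icc, mem_pmSet]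
    omega

lemma neg_mem_U {k : ℕ} {S : Finset ℤ} (hS : S ⊆ pmSet k) {i : ℤ} (hi : i ∈ S) :
    -i ∈ S.biUnion (Kset k) := by
  refine Finset.mem_biUnion.2 ⟨i, hi, ?_⟩
  rw [mem_Kset (hS hi)]
  have := mem_pmSet.1 (hS hi)
  omega

lemma pos_mem_U {k : ℕ} {S : Finset ℤ} (hS : S ⊆ pmSet k) {i : ℤ} (hi : i ∈ S)
    (hpos : 0 < i) {m : ℤ} (h1 : 1 ≤ m) (h2 : m ≤ k+1) (hne : m ≠ i) :
    m ∈ S.biUnion (Kset k) := by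
  refine Finset.mem_biUnion.2 ⟨i, hi, ?_⟩
  rw [mem_Kset (hS hi)]
  omega

lemma negm_mem_U {k : ℕ} {S : Finset ℤ} (hS : S ⊆ pmSet k) {i : ℤ} (hi : i ∈ S)
    (hneg : i < 0) {m : ℤ} (h1 : 1 ≤ m) (h2 : m ≤ k+1) (hne : m ≠ -i) :
    -m ∈ S.biUnion (Kset k) := by
  refine Finset.mem_biUnion.2 ⟨i, hi, ?_⟩
  rw [mem_Kset (hS hi)]
  omega

lemma ne_zero_of_mem_U {k : ℕ} {S : Finset ℤ} (hS : S ⊆ pmSet k) {x : ℤ}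
    (hx : x ∈ S.biUnion (Kset k)) : x ≠ 0 := by
  obtain ⟨i, hi, hxi⟩ := Finset.mem_biUnion.1 hx
  rw [mem_Kset (hS hi)] at hxi
  have := mem_pmSet.1 (hS hi)
  omega

lemma main_card (k : ℕ) (hk : 3 ≤ k) (S : Finset ℤ) (hS : S ⊆ pmSet k)
    (h2 : 2 ≤ S.card) (hk1 : S.card ≤ k + 1) :
    S.card + k < (S.biUnion (Kset k)).card := by
  set U := S.biUnion (Kset k) with hU
  set Pos := U.filter (fun x => 0 < x) with hPos
  set Neg := U.filter (fun x => x < 0) with hNeg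
  set Neg' := Neg.image (fun x => -x) with hNeg'
  -- cardinality decomposition
  have hcardU : U.card = Pos.card + Neg.card := by
    have hsplit := Finset.card_filter_add_card_filter_not (s := U)
      (p := fun x => 0 < x)
    have heq : U.filter (fun x => ¬ 0 < x) = Neg := by
      apply Finset.filter_congr
      intro x hx
      have := ne_zero_of_mem_U hS hx
      constructor <;> intro <;> omega
    rw [heq] at hsplit
    rw [hPos]
    omega
  have hcardNeg' : Neg'.card = Neg.card :=
    Finset.card_image_of_injective _ neg_injective
  -- membership characterizations
  have hmemPos : ∀ m : ℤ, m ∈ Pos ↔ m ∈ U ∧ 0 < m := by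
    intro m; simp [hPos, Finset.mem_filter]
  have hmemNeg' : ∀ m : ℤ, m ∈ Neg' ↔ -m ∈ U ∧ 0 < m := by
    intro m
    simp only [hNeg', hNeg, Finset.mem_image, Finset.mem_filter]
    constructor
    · rintro ⟨x, ⟨hxU, hx0⟩, rfl⟩; exact ⟨by simpa using hxU, by omega⟩
    · intro ⟨h1, h2⟩; exact ⟨-m, ⟨h1, by omega⟩, by omega⟩
  -- every pair {m,-m}, m ∈ [1,k+1], is hit
  have hSne : S.Nonempty := Finset.card_pos.mp (by omega)
  have hcover : Finset.Icc (1:ℤ) (k+1) ⊆ Pos ∪ Neg' := by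
    intro m hm
    rw [Finset.mem_Icc] at hm
    obtain ⟨i, hi⟩ := hSne
    have hipm := mem_pmSet.1 (hS hi)
    rw [Finset.mem_union, hmemPos, hmemNeg']
    rcases lt_or_gt_of_ne hipm.1 with hneg | hpos
    · rcases eq_or_ne m (-i) with rfl | hne
      · left; exact ⟨neg_mem_U hS hi, by omega⟩
      · right; exact ⟨negm_mem_U hS hi hneg hm.1 hm.2 hne, by omega⟩
    · rcases eq_or_ne m i with rfl | hne
      · right; refine ⟨?_, by omega⟩; exact neg_mem_U hS hi
      · left; exact ⟨pos_mem_U hS hi hpos hm.1 hm.2 hne, by omega⟩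
  have hIccCard : (Finset.Icc (1:ℤ) (k+1)).card = k + 1 := by
    rw [Int.card_Icc]; omega
  set F := Pos ∩ Neg' with hF
  have hmemF : ∀ m : ℤ, m ∈ F ↔ 0 < m ∧ m ∈ U ∧ -m ∈ U := by
    intro m
    rw [hF, Finset.mem_inter, hmemPos, hmemNeg']
    tauto
  have hkey : Pos.card + Neg'.card = (Pos ∪ Neg').card + F.card :=
    (Finset.card_union_add_card_inter _ _).symm
  have hbig : k + 1 ≤ (Pos ∪ Neg').card :=
    hIccCard ▸ Finset.card_le_card hcover
  -- the main claim: S.card ≤ F.card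
  have hmain : S.card ≤ F.card := by
    set P := S.filter (fun x => 0 < x) with hP
    set N := S.filter (fun x => x < 0) with hN
    have hPmem : ∀ i ∈ P, i ∈ S ∧ 1 ≤ i ∧ i ≤ k := by
      intro i hi
      rw [hP, Finset.mem_filter] at hi
      have := mem_pmSet.1 (hS hi.1)
      exact ⟨hi.1, by omega, by omega⟩
    have hNmem : ∀ j ∈ N, j ∈ S ∧ -(k:ℤ) ≤ j ∧ j ≤ -1 := by
      intro j hj
      rw [hN, Finset.mem_filter] at hj
      have := mem_pmSet.1 (hS hj.1)
      exact ⟨hj.1, by omega, by omega⟩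
    have hcardPN : P.card + N.card = S.card := by
      have hsplit := Finset.card_filter_add_card_filter_not (s := S)
        (p := fun x => 0 < x)
      have heq : S.filter (fun x => ¬ 0 < x) = N := by
        apply Finset.filter_congr
        intro x hx
        have := (mem_pmSet.1 (hS hx)).1
        constructor <;> intro <;> omega
      rw [heq] at hsplit
      rw [hP]
      omega
    -- helpers
    have hpos2 : 1 < P.card → ∀ m : ℤ, 1 ≤ m → m ≤ k+1 → m ∈ U := by
      intro hp m h1 h2'
      obtain ⟨a, ha, b, hb, hab⟩ := Finset.one_lt_card.mp hp
      obtain ⟨haS, ha1, hak⟩ := hPmem a ha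
      obtain ⟨hbS, hb1, hbk⟩ := hPmem b hb
      rcases eq_or_ne m a with rfl | h
      · exact pos_mem_U hS hbS (by omega) h1 h2' (by omega)
      · exact pos_mem_U hS haS (by omega) h1 h2' h
    have hneg2 : 1 < N.card → ∀ m : ℤ, 1 ≤ m → m ≤ k+1 → -m ∈ U := by
      intro hq m h1 h2'
      obtain ⟨a, ha, b, hb, hab⟩ := Finset.one_lt_card.mp hq
      obtain ⟨haS, ha1, hak⟩ := hNmem a ha
      obtain ⟨hbS, hb1, hbk⟩ := hNmem b hb
      rcases eq_or_ne m (-a) with rfl | h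
      · exact negm_mem_U hS hbS (by omega) h1 h2' (by omega)
      · exact negm_mem_U hS haS (by omega) h1 h2' h
    have hktop : P.Nonempty → ((k:ℤ)+1) ∈ U := by
      rintro ⟨i, hi⟩
      obtain ⟨hiS, hi1, hik⟩ := hPmem i hi
      exact pos_mem_U hS hiS (by omega) (by omega) (by omega) (by omega)
    have hktop' : N.Nonempty → -((k:ℤ)+1) ∈ U := by
      rintro ⟨j, hj⟩
      obtain ⟨hjS, hj1, hjk⟩ := hNmem j hj
      exact negm_mem_U hS hjS (by omega) (by omega) (by omega) (by omega)
    by_cases hP0 : P.card = 0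
    · -- no positive indices: N' ⊆ F
      have hsub : N.image (fun x => -x) ⊆ F := by
        intro m hm
        obtain ⟨j, hj, rfl⟩ := Finset.mem_image.1 hm
        obtain ⟨hjS, hj1, hjk⟩ := hNmem j hj
        rw [hmemF]
        refine ⟨by omega, neg_mem_U hS hjS, ?_⟩
        exact hneg2 (by omega) (-j) (by omega) (by omega)
      calc S.card = (N.image (fun x => -x)).card := by
            rw [Finset.card_image_of_injective _ neg_injective]; omega
        _ ≤ F.card := Finset.card_le_card hsub
    · by_cases hQ0 : N.card = 0
      · -- no negative indices: P ⊆ F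
        have hsub : P ⊆ F := by
          intro i hi
          obtain ⟨hiS, hi1, hik⟩ := hPmem i hi
          rw [hmemF]
          exact ⟨by omega, hpos2 (by omega) i (by omega) (by omega),
            neg_mem_U hS hiS⟩
        calc S.card = P.card := by omega
          _ ≤ F.card := Finset.card_le_card hsub
      · -- both nonempty
        have hPne : P.Nonempty := Finset.card_pos.mp (by omega)
        have hNne : N.Nonempty := Finset.card_pos.mp (by omega)
        have hkF : ((k:ℤ)+1) ∈ F := by
          rw [hmemF]
          exact ⟨by omega, hktop hPne, hktop' hNne⟩
        by_cases hp2 : 2 ≤ P.card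
        · by_cases hq2 : 2 ≤ N.card
          · -- both ≥ 2 : Icc 1 (k+1) ⊆ F
            have hsub : Finset.Icc (1:ℤ) (k+1) ⊆ F := by
              intro m hm
              rw [Finset.mem_Icc] at hm
              rw [hmemF]
              exact ⟨by omega, hpos2 (by omega) m hm.1 hm.2,
                hneg2 (by omega) m hm.1 hm.2⟩
            have := Finset.card_le_card hsub
            omega
          · -- P ≥ 2, N = {j0}
            obtain ⟨j0, hj0⟩ := Finset.card_eq_one.mp (by omega : N.card = 1)
            have hj0N : j0 ∈ N := by rw [hj0]; exact Finset.mem_singleton_self _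
            obtain ⟨hj0S, hj01, hj0k⟩ := hNmem j0 hj0N
            by_cases hj : -j0 ∈ P
            · have hsub : Finset.Icc (1:ℤ) (k+1) ⊆ F := by
                intro m hm
                rw [Finset.mem_Icc] at hm
                rw [hmemF]
                refine ⟨by omega, hpos2 (by omega) m hm.1 hm.2, ?_⟩
                rcases eq_or_ne m (-j0) with rfl | hne
                · exact neg_mem_U hS ((hPmem _ hj).1)
                · exact negm_mem_U hS hj0S (by omega) hm.1 hm.2 hne
              have := Finset.card_le_card hsub
              omega
            · have hsub : (Finset.Icc (1:ℤ) (k+1)).erase (-j0) ⊆ F := by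
                intro m hm
                rw [Finset.mem_erase, Finset.mem_Icc] at hm
                rw [hmemF]
                exact ⟨by omega, hpos2 (by omega) m hm.2.1 hm.2.2,
                  negm_mem_U hS hj0S (by omega) hm.2.1 hm.2.2 hm.1⟩
              have hcard1 : ((Finset.Icc (1:ℤ) (k+1)).erase (-j0)).card = k := by
                rw [Finset.card_erase_of_mem (by rw [Finset.mem_Icc]; omega)]
                omega
              have hsub2 : P ⊆ (Finset.Icc (1:ℤ) k).erase (-j0) := by
                intro i hi
                obtain ⟨hiS, hi1, hik⟩ := hPmem i hi
                rw [Finset.mem_erase, Finset.mem_Icc]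
                exact ⟨fun h => hj (h ▸ hi), by omega, by omega⟩
              have hcard2 : ((Finset.Icc (1:ℤ) k).erase (-j0)).card = k - 1 := by
                rw [Finset.card_erase_of_mem (by rw [Finset.mem_Icc]; omega)]
                rw [Int.card_Icc]
                omega
              have h3 := Finset.card_le_card hsub
              have h4 := Finset.card_le_card hsub2
              omega
        · by_cases hq2 : 2 ≤ N.card
          · -- P = {i0}, N ≥ 2
            obtain ⟨i0, hi0⟩ := Finset.card_eq_one.mp (by omega : P.card = 1)
            have hi0P : i0 ∈ P := by rw [hi0]; exact Finset.mem_singleton_self _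
            obtain ⟨hi0S, hi01, hi0k⟩ := hPmem i0 hi0P
            by_cases hi : -i0 ∈ N
            · have hsub : Finset.Icc (1:ℤ) (k+1) ⊆ F := by
                intro m hm
                rw [Finset.mem_Icc] at hm
                rw [hmemF]
                refine ⟨by omega, ?_, hneg2 (by omega) m hm.1 hm.2⟩
                rcases eq_or_ne m i0 with rfl | hne
                · have := neg_mem_U hS ((hNmem _ hi).1)
                  rwa [neg_neg] at this
                · exact pos_mem_U hS hi0S (by omega) hm.1 hm.2 hne
              have := Finset.card_le_card hsub
              omega
            · have hsub : (Finset.Icc (1:ℤ) (k+1)).erase i0 ⊆ F := by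
                intro m hm
                rw [Finset.mem_erase, Finset.mem_Icc] at hm
                rw [hmemF]
                exact ⟨by omega, pos_mem_U hS hi0S (by omega) hm.2.1 hm.2.2 hm.1,
                  hneg2 (by omega) m hm.2.1 hm.2.2⟩
              have hcard1 : ((Finset.Icc (1:ℤ) (k+1)).erase i0).card = k := by
                rw [Finset.card_erase_of_mem (by rw [Finset.mem_Icc]; omega)]
                omega
              have hsub2 : N ⊆ (Finset.Icc (-(k:ℤ)) (-1)).erase (-i0) := by
                intro j hj
                obtain ⟨hjS, hj1, hjk⟩ := hNmem j hj
                rw [Finset.mem_erase, Finset.mem_Icc]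
                exact ⟨fun h => hi (h ▸ hj), by omega, by omega⟩
              have hcard2 : ((Finset.Icc (-(k:ℤ)) (-1)).erase (-i0)).card = k - 1 := by
                rw [Finset.card_erase_of_mem (by rw [Finset.mem_Icc]; omega)]
                rw [Int.card_Icc]
                omega
              have h3 := Finset.card_le_card hsub
              have h4 := Finset.card_le_card hsub2
              omega
          · -- P = {i0}, N = {j0}
            obtain ⟨i0, hi0⟩ := Finset.card_eq_one.mp (by omega : P.card = 1)
            have hi0P : i0 ∈ P := by rw [hi0]; exact Finset.mem_singleton_self _
            obtain ⟨hi0S, hi01, hi0k⟩ := hPmem i0 hi0P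
            obtain ⟨j0, hj0⟩ := Finset.card_eq_one.mp (by omega : N.card = 1)
            have hj0N : j0 ∈ N := by rw [hj0]; exact Finset.mem_singleton_self _
            obtain ⟨hj0S, hj01, hj0k⟩ := hNmem j0 hj0N
            have hScard : S.card = 2 := by omega
            by_cases hij : i0 = -j0
            · have hi0F : i0 ∈ F := by
                rw [hmemF]
                refine ⟨by omega, ?_, neg_mem_U hS hi0S⟩
                rw [hij]
                exact neg_mem_U hS hj0S
              have hsub : ({(k:ℤ)+1, i0} : Finset ℤ) ⊆ F := by
                intro x hx
                rcases Finset.mem_insert.1 hx with rfl | hx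
                · exact hkF
                · rw [Finset.mem_singleton.1 hx]; exact hi0F
              have hcard : ({(k:ℤ)+1, i0} : Finset ℤ).card = 2 :=
                Finset.card_pair (by omega)
              have := Finset.card_le_card hsub
              omega
            · obtain ⟨m, hm1, hm3, hmi, hmj⟩ :
                  ∃ m : ℤ, 1 ≤ m ∧ m ≤ 3 ∧ m ≠ i0 ∧ m ≠ -j0 := by
                refine ⟨if i0 = 1 ∨ -j0 = 1 then (if i0 = 2 ∨ -j0 = 2 then 3 else 2)
                  else 1, ?_⟩
                split_ifs <;> omega
              have hmF : m ∈ F := by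
                rw [hmemF]
                exact ⟨by omega, pos_mem_U hS hi0S (by omega) (by omega) (by omega) hmi,
                  negm_mem_U hS hj0S (by omega) (by omega) (by omega) hmj⟩
              have hsub : ({(k:ℤ)+1, m} : Finset ℤ) ⊆ F := by
                intro x hx
                rcases Finset.mem_insert.1 hx with rfl | hx
                · exact hkF
                · rw [Finset.mem_singleton.1 hx]; exact hmF
              have hcard : ({(k:ℤ)+1, m} : Finset ℤ).card = 2 :=
                Finset.card_pair (by omega)
              have := Finset.card_le_card hsub
              omega

  omega

lemma Kset_injOn (k : ℕ) : Set.InjOn (Kset k) (pmSet k) := by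
  intro i hi i' hi' h
  have hipm := mem_pmSet.1 (Finset.mem_coe.1 hi)
  have hipm' := mem_pmSet.1 (Finset.mem_coe.1 hi')
  have h1 : (((k:ℤ)+1) ∈ Kset k i) ↔ (((k:ℤ)+1) ∈ Kset k i') := by rw [h]
  rw [mem_Kset (Finset.mem_coe.1 hi), mem_Kset (Finset.mem_coe.1 hi')] at h1
  have h2 : -i ∈ Kset k i := by rw [mem_Kset (Finset.mem_coe.1 hi)]; omega
  rw [h, mem_Kset (Finset.mem_coe.1 hi')] at h2
  omega

/-- Fact 2: every subfamily `T ⊆ U_k` with `2 ≤ |T| ≤ k+1`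
satisfies `|T| + k < |⋃_{L ∈ T} L|`. -/
theorem Ufamily_BBA_strict (k : ℕ) (hk : 3 ≤ k)
    (T : Finset (Finset ℤ)) (hT : T ⊆ Ufamily k)
    (h2 : 2 ≤ T.card) (hk1 : T.card ≤ k + 1) :
    T.card + k < (T.biUnion id).card := by
  set S := (pmSet k).filter (fun i => Kset k i ∈ T) with hSdef
  have hS : S ⊆ pmSet k := Finset.filter_subset _ _
  have hTS : T = S.image (Kset k) := by
    ext L
    constructor
    · intro hL
      obtain ⟨i, hi, rfl⟩ := Finset.mem_image.1 (hT hL)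
      exact Finset.mem_image.2 ⟨i, Finset.mem_filter.2 ⟨hi, hL⟩, rfl⟩
    · intro hL
      obtain ⟨i, hi, rfl⟩ := Finset.mem_image.1 hL
      exact (Finset.mem_filter.1 hi).2
  have hcard : T.card = S.card := by
    rw [hTS]
    exact Finset.card_image_of_injOn ((Kset_injOn k).mono (by exact_mod_cast hS))
  have hbu : T.biUnion id = S.biUnion (Kset k) := by
    rw [hTS, Finset.image_biUnion]
    rfl
  rw [hcard, hbu]
  exact main_card k hk S hS (hcard ▸ h2) (hcard ▸ hk1)
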